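/- Let a, b, c > 0 be real numbers and set n = 2 + a + b + c + 1/a + 1/b + 1/c. Define the three-qubit state ρ_abc on ℂ²⊗ℂ²⊗ℂ² (matrix indexed by the basis |000⟩, |001⟩, |010⟩, |011⟩, |100⟩, |101⟩, |110⟩, |111⟩) as the matrix whose diagonal entries are (1, a, b, 1/c, c, 1/b, 1/a, 1)/n, whose (|000⟩,|111⟩) and (|111⟩,|000⟩) entries are 1/n, and all of whose other entries are 0. If abc ≠ 1, then ρ_abc is not fully separable. -/

import Mathlib

open Matrix
open scoped Kronecker ComplexOrder

noncomputable section

/-- A density matrix: a positive semidefinite complex matrix of trace 1. -/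
def IsDensityMatrix {ι : Type*} [Fintype ι] (ρ : Matrix ι ι ℂ) : Prop :=
  ρ.PosSemidef ∧ ρ.trace = 1

/-- A tripartite state is fully separable if it is a finite convex combination of
Kronecker products of density matrices on the three factors. -/
def FullySeparable {dA dB dC : ℕ}
    (ρ : Matrix (Fin dA × Fin dB × Fin dC) (Fin dA × Fin dB × Fin dC) ℂ) : Prop :=
  ∃ (n : ℕ) (p : Fin n → ℝ) (ρA : Fin n → Matrix (Fin dA) (Fin dA) ℂ)
    (ρB : Fin n → Matrix (Fin dB) (Fin dB) ℂ) (ρC : Fin n → Matrix (Fin dC) (Fin dC) ℂ),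
    (∀ k, 0 ≤ p k) ∧ (∑ k, p k = 1) ∧
    (∀ k, IsDensityMatrix (ρA k)) ∧ (∀ k, IsDensityMatrix (ρB k)) ∧
    (∀ k, IsDensityMatrix (ρC k)) ∧
    ρ = ∑ k, (p k : ℂ) • (ρA k ⊗ₖ (ρB k ⊗ₖ ρC k))

/-- The diagonal entries `(1, a, b, 1/c, c, 1/b, 1/a, 1)` of the (unnormalized) state
`ρ_abc` of Acín et al., indexed by the three-qubit product basis `|000⟩, …, |111⟩`. -/
def rhoAbcDiag (a b c : ℝ) (x : Fin 2 × Fin 2 × Fin 2) : ℝ :=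
  if x = (0, 0, 0) then 1
  else if x = (0, 0, 1) then a
  else if x = (0, 1, 0) then b
  else if x = (0, 1, 1) then 1 / c
  else if x = (1, 0, 0) then c
  else if x = (1, 0, 1) then 1 / b
  else if x = (1, 1, 0) then 1 / a
  else 1

/-- The three-qubit state `ρ_abc` of Acín et al. (Eq. (39)):  diagonal entries
`(1, a, b, 1/c, c, 1/b, 1/a, 1)/n`, corner entries `(|000⟩,|111⟩)` and `(|111⟩,|000⟩)`
equal to `1/n`, and all other entries zero, with `n = 2 + a + b + c + 1/a + 1/b + 1/c`. -/
def rhoAbc (a b c : ℝ) : Matrix (Fin 2 × Fin 2 × Fin 2) (Fin 2 × Fin 2 × Fin 2) ℂ :=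
  Matrix.of fun x y =>
    if x = y then (rhoAbcDiag a b c x : ℂ) / ((2 + a + b + c + 1/a + 1/b + 1/c : ℝ) : ℂ)
    else if (x = (0, 0, 0) ∧ y = (1, 1, 1)) ∨ (x = (1, 1, 1) ∧ y = (0, 0, 0)) then
      1 / ((2 + a + b + c + 1/a + 1/b + 1/c : ℝ) : ℂ)
    else 0

/-- For a 2×2 PSD complex matrix, the diagonal is real nonnegative and the
off-diagonal entry satisfies `|A₀₁|² ≤ A₀₀ A₁₁`. -/
private lemma psd2_facts {A : Matrix (Fin 2) (Fin 2) ℂ} (hA : A.PosSemidef) :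
    ∃ f : Fin 2 → ℝ, (∀ i, 0 ≤ f i) ∧ (∀ i, A i i = (f i : ℂ)) ∧
      ‖A 0 1‖ ^ 2 ≤ f 0 * f 1 := by
  obtain ⟨B, rfl⟩ : ∃ B : Matrix (Fin 2) (Fin 2) ℂ, A = Bᴴ * B := by
    open scoped MatrixOrder in exact CStarAlgebra.nonneg_iff_eq_star_mul_self.mp hA.nonneg
  refine ⟨fun i => Complex.normSq (B 0 i) + Complex.normSq (B 1 i),
    fun i => add_nonneg (Complex.normSq_nonneg _) (Complex.normSq_nonneg _), fun i => ?_, ?_⟩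
  · simp [Matrix.mul_apply, Matrix.conjTranspose_apply, Fin.sum_univ_two,
      ← Complex.normSq_eq_conj_mul_self]
  · have hentry : (Bᴴ * B) 0 1 =
        (starRingEnd ℂ) (B 0 0) * B 0 1 + (starRingEnd ℂ) (B 1 0) * B 1 1 := by
      simp [Matrix.mul_apply, Matrix.conjTranspose_apply, Fin.sum_univ_two]
    rw [hentry, Complex.sq_norm]
    have key : (Complex.normSq (B 0 0) + Complex.normSq (B 1 0)) *
          (Complex.normSq (B 0 1) + Complex.normSq (B 1 1))
        - Complex.normSq ((starRingEnd ℂ) (B 0 0) * B 0 1 + (starRingEnd ℂ) (B 1 0) * B 1 1)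
        = Complex.normSq (B 0 0 * B 1 1 - B 1 0 * B 0 1) := by
      simp [Complex.normSq_apply, Complex.add_re, Complex.add_im, Complex.mul_re,
        Complex.mul_im, Complex.sub_re, Complex.sub_im]
      ring
    dsimp only
    nlinarith [Complex.normSq_nonneg (B 0 0 * B 1 1 - B 1 0 * B 0 1)]

/-- AM–GM for four nonnegative reals, in the form needed below. -/
private lemma amgm4 {y1 y2 y3 y4 m : ℝ} (h1 : 0 ≤ y1) (h2 : 0 ≤ y2) (h3 : 0 ≤ y3)
    (h4 : 0 ≤ y4) (hm : 0 ≤ m) (h : m ^ 4 ≤ y1 * y2 * y3 * y4) :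
    m ≤ (y1 + y2 + y3 + y4) / 4 := by
  have h12 : y1 * y2 ≤ ((y1 + y2) / 2) ^ 2 := by nlinarith [sq_nonneg (y1 - y2)]
  have h34 : y3 * y4 ≤ ((y3 + y4) / 2) ^ 2 := by nlinarith [sq_nonneg (y3 - y4)]
  set u := (y1 + y2) / 2 with hu
  set v := (y3 + y4) / 2 with hv
  have hu0 : 0 ≤ u := by positivity
  have hv0 : 0 ≤ v := by positivity
  have huv : u * v ≤ ((u + v) / 2) ^ 2 := by nlinarith [sq_nonneg (u - v)]
  have hstep : y1 * y2 * (y3 * y4) ≤ u ^ 2 * v ^ 2 :=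
    mul_le_mul h12 h34 (mul_nonneg h3 h4) (sq_nonneg u)
  have hstep2 : u ^ 2 * v ^ 2 ≤ ((u + v) / 2) ^ 4 := by
    nlinarith [mul_nonneg hu0 hv0, sq_nonneg ((u + v) / 2)]
  have hfin : m ^ 4 ≤ ((y1 + y2 + y3 + y4) / 4) ^ 4 := by
    have h4' : (y1 + y2 + y3 + y4) / 4 = (u + v) / 2 := by rw [hu, hv]; ring
    rw [h4']; nlinarith
  exact le_of_pow_le_pow_left₀ (by norm_num) (by positivity) hfin

/-- The common endgame: if per-component AM–GM data forces `g·S ≤ 1/nn ≤ S` with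
`g > 1`, we get a contradiction. -/
private lemma final_contra {N : ℕ} {p m z1 z2 z3 z4 : Fin N → ℝ} {g nn : ℝ}
    (hp : ∀ k, 0 ≤ p k) (hm : ∀ k, 0 ≤ m k)
    (h1 : ∀ k, 0 ≤ z1 k) (h2 : ∀ k, 0 ≤ z2 k) (h3 : ∀ k, 0 ≤ z3 k) (h4 : ∀ k, 0 ≤ z4 k)
    (hg : 1 < g) (hnn : 0 < nn)
    (hb : ∀ k, (g * m k) ^ 4 ≤ z1 k * z2 k * z3 k * z4 k)
    (hs1 : ∑ k, p k * z1 k = 1 / nn) (hs2 : ∑ k, p k * z2 k = 1 / nn)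
    (hs3 : ∑ k, p k * z3 k = 1 / nn) (hs4 : ∑ k, p k * z4 k = 1 / nn)
    (hlow : 1 / nn ≤ ∑ k, p k * m k) : False := by
  have hAM : ∀ k, g * m k ≤ (z1 k + z2 k + z3 k + z4 k) / 4 := fun k =>
    amgm4 (h1 k) (h2 k) (h3 k) (h4 k)
      (mul_nonneg (le_of_lt (lt_trans one_pos hg)) (hm k)) (hb k)
  have hsum : ∑ k, p k * (g * m k) ≤ ∑ k, p k * ((z1 k + z2 k + z3 k + z4 k) / 4) :=
    Finset.sum_le_sum fun k _ => mul_le_mul_of_nonneg_left (hAM k) (hp k)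
  have l1 : ∑ k, p k * (g * m k) = g * ∑ k, p k * m k := by
    rw [Finset.mul_sum]; exact Finset.sum_congr rfl fun k _ => by ring
  have l2 : ∑ k, p k * ((z1 k + z2 k + z3 k + z4 k) / 4)
      = (∑ k, p k * z1 k + ∑ k, p k * z2 k + ∑ k, p k * z3 k + ∑ k, p k * z4 k) / 4 := by
    rw [← Finset.sum_add_distrib, ← Finset.sum_add_distrib, ← Finset.sum_add_distrib,
      Finset.sum_div]
    exact Finset.sum_congr rfl fun k _ => by ring
  rw [l1, l2, hs1, hs2, hs3, hs4] at hsum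
  have hS : 0 < ∑ k, p k * m k := lt_of_lt_of_le (one_div_pos.mpr hnn) hlow
  nlinarith

/-- **The bound entangled states `ρ_abc` are not fully separable for `abc ≠ 1`.** -/
theorem rhoAbc_not_fully_separable (a b c : ℝ) (ha : 0 < a) (hb : 0 < b) (hc : 0 < c)
    (habc : a * b * c ≠ 1) : ¬ FullySeparable (rhoAbc a b c) := by
  intro hsep
  obtain ⟨N, p, ρA, ρB, ρC, hp, -, hdA, hdB, hdC, hrep⟩ := hsep
  have habcpos : 0 < a * b * c := by positivity
  have ha' : a ≠ 0 := ne_of_gt ha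
  have hb' : b ≠ 0 := ne_of_gt hb
  have hc' : c ≠ 0 := ne_of_gt hc
  have hnn : (0:ℝ) < 2 + a + b + c + 1/a + 1/b + 1/c := by positivity
  choose αf hα0 hαeq hαle using fun k => psd2_facts (hdA k).1
  choose βf hβ0 hβeq hβle using fun k => psd2_facts (hdB k).1
  choose γf hγ0 hγeq hγle using fun k => psd2_facts (hdC k).1
  -- entrywise form of the separable decomposition
  have hE : ∀ x y : Fin 2 × Fin 2 × Fin 2, rhoAbc a b c x y =
      ∑ k, (p k : ℂ) * (ρA k x.1 y.1 * (ρB k x.2.1 y.2.1 * ρC k x.2.2 y.2.2)) := by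
    intro x y
    rw [hrep]
    simp [Matrix.sum_apply, Matrix.kronecker_apply, smul_eq_mul, mul_assoc]
  -- the diagonal equations, in real form
  have hdiag : ∀ x : Fin 2 × Fin 2 × Fin 2,
      rhoAbcDiag a b c x / (2 + a + b + c + 1/a + 1/b + 1/c)
        = ∑ k, p k * (αf k x.1 * (βf k x.2.1 * γf k x.2.2)) := by
    intro x
    have h := hE x x
    have hL : rhoAbc a b c x x
        = ((rhoAbcDiag a b c x / (2 + a + b + c + 1/a + 1/b + 1/c) : ℝ) : ℂ) := by
      simp only [rhoAbc, Matrix.of_apply, if_pos rfl]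
      push_cast
      ring
    rw [hL] at h
    simp only [hαeq, hβeq, hγeq] at h
    exact_mod_cast h
  -- the corner equation
  have hcorner : ((( (2 + a + b + c + 1/a + 1/b + 1/c : ℝ))⁻¹ : ℝ) : ℂ)
      = ∑ k, (p k : ℂ) * (ρA k 0 1 * (ρB k 0 1 * ρC k 0 1)) := by
    have h := hE (0,0,0) (1,1,1)
    have hL : rhoAbc a b c (0,0,0) (1,1,1)
        = (((2 + a + b + c + 1/a + 1/b + 1/c : ℝ)⁻¹ : ℝ) : ℂ) := by
      simp only [rhoAbc, Matrix.of_apply]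
      rw [if_neg (by decide), if_pos (by decide)]
      push_cast
      ring
    rw [hL] at h
    exact h
  -- lower bound on the weighted sum of off-diagonal moduli
  set m : Fin N → ℝ := fun k =>
    ‖ρA k 0 1‖ * (‖ρB k 0 1‖ * ‖ρC k 0 1‖) with hmdef
  have hm0 : ∀ k, 0 ≤ m k := fun k => by positivity
  have hlow : 1 / (2 + a + b + c + 1/a + 1/b + 1/c) ≤ ∑ k, p k * m k := by
    have h1 : (1 : ℝ) / (2 + a + b + c + 1/a + 1/b + 1/c)
        = ‖((((2 + a + b + c + 1/a + 1/b + 1/c : ℝ))⁻¹ : ℝ) : ℂ)‖ := by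
      rw [Complex.norm_real, Real.norm_eq_abs, abs_of_pos (inv_pos.mpr hnn), one_div]
    rw [h1, hcorner]
    refine le_trans (norm_sum_le _ _) (le_of_eq ?_)
    refine Finset.sum_congr rfl fun k _ => ?_
    rw [norm_mul, norm_mul, norm_mul, Complex.norm_real, Real.norm_eq_abs,
      abs_of_nonneg (hp k)]
  -- the per-component Cauchy–Schwarz bound
  have hm2 : ∀ k, m k ^ 2 ≤ (αf k 0 * αf k 1) * ((βf k 0 * βf k 1) * (γf k 0 * γf k 1)) := by
    intro k
    have step1 : ‖ρB k 0 1‖ ^ 2 * ‖ρC k 0 1‖ ^ 2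
        ≤ (βf k 0 * βf k 1) * (γf k 0 * γf k 1) :=
      mul_le_mul (hβle k) (hγle k) (sq_nonneg _) (mul_nonneg (hβ0 k 0) (hβ0 k 1))
    have step2 : ‖ρA k 0 1‖ ^ 2 *
          (‖ρB k 0 1‖ ^ 2 * ‖ρC k 0 1‖ ^ 2)
        ≤ (αf k 0 * αf k 1) * ((βf k 0 * βf k 1) * (γf k 0 * γf k 1)) :=
      mul_le_mul (hαle k) step1 (mul_nonneg (sq_nonneg _) (sq_nonneg _))
        (mul_nonneg (hα0 k 0) (hα0 k 1))
    have hms : m k ^ 2 = ‖ρA k 0 1‖ ^ 2 *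
        (‖ρB k 0 1‖ ^ 2 * ‖ρC k 0 1‖ ^ 2) := by
      rw [hmdef]; ring
    rw [hms]; exact step2
  have hm4 : ∀ k, m k ^ 4 ≤
      ((αf k 0 * αf k 1) * ((βf k 0 * βf k 1) * (γf k 0 * γf k 1))) ^ 2 := by
    intro k
    nlinarith [hm2 k, sq_nonneg (m k), hm0 k]
  -- values of the diagonal function
  have hd000 : rhoAbcDiag a b c (0,0,0) = 1 := by
    simp only [rhoAbcDiag]; rw [if_pos (by decide)]
  have hd001 : rhoAbcDiag a b c (0,0,1) = a := by
    simp only [rhoAbcDiag]; rw [if_neg (by decide), if_pos (by decide)]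
  have hd010 : rhoAbcDiag a b c (0,1,0) = b := by
    simp only [rhoAbcDiag]; rw [if_neg (by decide), if_neg (by decide), if_pos (by decide)]
  have hd011 : rhoAbcDiag a b c (0,1,1) = 1/c := by
    simp only [rhoAbcDiag]
    rw [if_neg (by decide), if_neg (by decide), if_neg (by decide), if_pos (by decide)]
  have hd100 : rhoAbcDiag a b c (1,0,0) = c := by
    simp only [rhoAbcDiag]
    rw [if_neg (by decide), if_neg (by decide), if_neg (by decide), if_neg (by decide),
      if_pos (by decide)]
  have hd101 : rhoAbcDiag a b c (1,0,1) = 1/b := by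
    simp only [rhoAbcDiag]
    rw [if_neg (by decide), if_neg (by decide), if_neg (by decide), if_neg (by decide),
      if_neg (by decide), if_pos (by decide)]
  have hd110 : rhoAbcDiag a b c (1,1,0) = 1/a := by
    simp only [rhoAbcDiag]
    rw [if_neg (by decide), if_neg (by decide), if_neg (by decide), if_neg (by decide),
      if_neg (by decide), if_neg (by decide), if_pos (by decide)]
  have hd111 : rhoAbcDiag a b c (1,1,1) = 1 := by
    simp only [rhoAbcDiag]
    rw [if_neg (by decide), if_neg (by decide), if_neg (by decide), if_neg (by decide),
      if_neg (by decide), if_neg (by decide), if_neg (by decide)]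
  rcases lt_or_gt_of_ne habc with hlt | hgt
  · -- abc < 1 : use weights on q111, q100, q010, q001
    set g : ℝ := ((a*b*c)⁻¹) ^ ((4:ℝ)⁻¹) with hgdef
    have hg4 : g ^ (4:ℕ) = (a*b*c)⁻¹ := by
      rw [hgdef, ← Real.rpow_natCast (((a*b*c)⁻¹) ^ ((4:ℝ)⁻¹)) 4,
        ← Real.rpow_mul (by positivity)]
      norm_num
    have hg1 : 1 < g := by
      rw [hgdef]
      exact (Real.one_lt_rpow_iff_of_pos (by positivity)).mpr
        (Or.inl ⟨by rw [one_lt_inv_iff₀]; exact ⟨habcpos, hlt⟩, by norm_num⟩)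
    have h111 := hdiag (1,1,1); rw [hd111] at h111
    have h100 := hdiag (1,0,0); rw [hd100] at h100
    have h010 := hdiag (0,1,0); rw [hd010] at h010
    have h001 := hdiag (0,0,1); rw [hd001] at h001
    refine final_contra (p := p) (m := m)
      (z1 := fun k => αf k 1 * (βf k 1 * γf k 1))
      (z2 := fun k => c⁻¹ * (αf k 1 * (βf k 0 * γf k 0)))
      (z3 := fun k => b⁻¹ * (αf k 0 * (βf k 1 * γf k 0)))
      (z4 := fun k => a⁻¹ * (αf k 0 * (βf k 0 * γf k 1)))
      (g := g) (nn := 2 + a + b + c + 1/a + 1/b + 1/c)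
      hp hm0 ?_ ?_ ?_ ?_ hg1 hnn ?_ ?_ ?_ ?_ ?_ hlow
    · intro k; exact mul_nonneg (hα0 k 1) (mul_nonneg (hβ0 k 1) (hγ0 k 1))
    · intro k
      exact mul_nonneg (inv_nonneg.mpr hc.le)
        (mul_nonneg (hα0 k 1) (mul_nonneg (hβ0 k 0) (hγ0 k 0)))
    · intro k
      exact mul_nonneg (inv_nonneg.mpr hb.le)
        (mul_nonneg (hα0 k 0) (mul_nonneg (hβ0 k 1) (hγ0 k 0)))
    · intro k
      exact mul_nonneg (inv_nonneg.mpr ha.le)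
        (mul_nonneg (hα0 k 0) (mul_nonneg (hβ0 k 0) (hγ0 k 1)))
    · intro k
      have hpow : (g * m k) ^ 4 = (a*b*c)⁻¹ * m k ^ 4 := by rw [mul_pow, hg4]
      rw [hpow]
      calc (a*b*c)⁻¹ * m k ^ 4
          ≤ (a*b*c)⁻¹ * ((αf k 0 * αf k 1) * ((βf k 0 * βf k 1) * (γf k 0 * γf k 1))) ^ 2 :=
            mul_le_mul_of_nonneg_left (hm4 k) (by positivity)
        _ = (αf k 1 * (βf k 1 * γf k 1)) * (c⁻¹ * (αf k 1 * (βf k 0 * γf k 0)))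
            * (b⁻¹ * (αf k 0 * (βf k 1 * γf k 0))) * (a⁻¹ * (αf k 0 * (βf k 0 * γf k 1))) := by
            rw [mul_inv, mul_inv]; ring
    · exact h111.symm
    · have hsc : ∑ k, p k * (c⁻¹ * (αf k 1 * (βf k 0 * γf k 0)))
          = c⁻¹ * ∑ k, p k * (αf k 1 * (βf k 0 * γf k 0)) := by
        rw [Finset.mul_sum]; exact Finset.sum_congr rfl fun k _ => by ring
      rw [hsc, ← h100, ← mul_div_assoc, inv_mul_cancel₀ hc']
    · have hsb : ∑ k, p k * (b⁻¹ * (αf k 0 * (βf k 1 * γf k 0)))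
          = b⁻¹ * ∑ k, p k * (αf k 0 * (βf k 1 * γf k 0)) := by
        rw [Finset.mul_sum]; exact Finset.sum_congr rfl fun k _ => by ring
      rw [hsb, ← h010, ← mul_div_assoc, inv_mul_cancel₀ hb']
    · have hsa : ∑ k, p k * (a⁻¹ * (αf k 0 * (βf k 0 * γf k 1)))
          = a⁻¹ * ∑ k, p k * (αf k 0 * (βf k 0 * γf k 1)) := by
        rw [Finset.mul_sum]; exact Finset.sum_congr rfl fun k _ => by ring
      rw [hsa, ← h001, ← mul_div_assoc, inv_mul_cancel₀ ha']
  · -- abc > 1 : use weights on q000, q011, q101, q110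
    set g : ℝ := (a*b*c) ^ ((4:ℝ)⁻¹) with hgdef
    have hg4 : g ^ (4:ℕ) = a*b*c := by
      rw [hgdef, ← Real.rpow_natCast ((a*b*c) ^ ((4:ℝ)⁻¹)) 4,
        ← Real.rpow_mul (by positivity)]
      norm_num
    have hg1 : 1 < g := by
      rw [hgdef]
      exact (Real.one_lt_rpow_iff_of_pos habcpos).mpr (Or.inl ⟨hgt, by norm_num⟩)
    have h000 := hdiag (0,0,0); rw [hd000] at h000
    have h011 := hdiag (0,1,1); rw [hd011] at h011
    have h101 := hdiag (1,0,1); rw [hd101] at h101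
    have h110 := hdiag (1,1,0); rw [hd110] at h110
    refine final_contra (p := p) (m := m)
      (z1 := fun k => αf k 0 * (βf k 0 * γf k 0))
      (z2 := fun k => c * (αf k 0 * (βf k 1 * γf k 1)))
      (z3 := fun k => b * (αf k 1 * (βf k 0 * γf k 1)))
      (z4 := fun k => a * (αf k 1 * (βf k 1 * γf k 0)))
      (g := g) (nn := 2 + a + b + c + 1/a + 1/b + 1/c)
      hp hm0 ?_ ?_ ?_ ?_ hg1 hnn ?_ ?_ ?_ ?_ ?_ hlow
    · intro k; exact mul_nonneg (hα0 k 0) (mul_nonneg (hβ0 k 0) (hγ0 k 0))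
    · intro k
      exact mul_nonneg hc.le (mul_nonneg (hα0 k 0) (mul_nonneg (hβ0 k 1) (hγ0 k 1)))
    · intro k
      exact mul_nonneg hb.le (mul_nonneg (hα0 k 1) (mul_nonneg (hβ0 k 0) (hγ0 k 1)))
    · intro k
      exact mul_nonneg ha.le (mul_nonneg (hα0 k 1) (mul_nonneg (hβ0 k 1) (hγ0 k 0)))
    · intro k
      have hpow : (g * m k) ^ 4 = (a*b*c) * m k ^ 4 := by rw [mul_pow, hg4]
      rw [hpow]
      calc (a*b*c) * m k ^ 4
          ≤ (a*b*c) * ((αf k 0 * αf k 1) * ((βf k 0 * βf k 1) * (γf k 0 * γf k 1))) ^ 2 :=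
            mul_le_mul_of_nonneg_left (hm4 k) (by positivity)
        _ = (αf k 0 * (βf k 0 * γf k 0)) * (c * (αf k 0 * (βf k 1 * γf k 1)))
            * (b * (αf k 1 * (βf k 0 * γf k 1))) * (a * (αf k 1 * (βf k 1 * γf k 0))) := by
            ring
    · exact h000.symm
    · have hsc : ∑ k, p k * (c * (αf k 0 * (βf k 1 * γf k 1)))
          = c * ∑ k, p k * (αf k 0 * (βf k 1 * γf k 1)) := by
        rw [Finset.mul_sum]; exact Finset.sum_congr rfl fun k _ => by ring
      rw [hsc, ← h011, ← mul_div_assoc, mul_one_div_cancel hc']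
    · have hsb : ∑ k, p k * (b * (αf k 1 * (βf k 0 * γf k 1)))
          = b * ∑ k, p k * (αf k 1 * (βf k 0 * γf k 1)) := by
        rw [Finset.mul_sum]; exact Finset.sum_congr rfl fun k _ => by ring
      rw [hsb, ← h101, ← mul_div_assoc, mul_one_div_cancel hb']
    · have hsa : ∑ k, p k * (a * (αf k 1 * (βf k 1 * γf k 0)))
          = a * ∑ k, p k * (αf k 1 * (βf k 1 * γf k 0)) := by
        rw [Finset.mul_sum]; exact Finset.sum_congr rfl fun k _ => by ring
      rw [hsa, ← h110, ← mul_div_assoc, mul_one_div_cancel ha']
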